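/- Let P be a Markov kernel on a measurable space E satisfying the mixing condition (A.1) with Λ ∈ (0,1), and let g : E → ℝ be bounded measurable with MPE operator T. Then for every bounded measurable f : E → ℝ one has ‖Tf‖_sp ≤ ‖g‖_sp + (1/2)·log(1 + Λ·e^{2‖f‖_sp}). -/

import Mathlib

open MeasureTheory ProbabilityTheory

/-- The span seminorm `‖f‖_sp = (sup f - inf f)/2`. -/
noncomputable def spanSeminorm {E : Type*} (f : E → ℝ) : ℝ :=
  ((⨆ x, f x) - ⨅ x, f x) / 2

/-- The multiplicative Poisson equation (MPE) operator
`(T f)(x) = g(x) + log ∫ exp (f y) P(x, dy)`. -/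
noncomputable def mpeOp {E : Type*} [MeasurableSpace E] (P : Kernel E E) (g : E → ℝ)
    (f : E → ℝ) : E → ℝ :=
  fun x => g x + Real.log (∫ y, Real.exp (f y) ∂(P x))

/-- Difference of integrals of a `[0,C]`-valued function against two probability
measures whose difference on every set is at most `Λ`, is at most `Λ * C`. -/
lemma tv_integral_diff_le {E : Type*} [MeasurableSpace E] (μ ν : Measure E)
    [IsProbabilityMeasure μ] [IsProbabilityMeasure ν]
    (Λ C : ℝ) (hΛ : 0 ≤ Λ) (hC : 0 ≤ C)
    (hmix : ∀ B : Set E, MeasurableSet B → |(μ B).toReal - (ν B).toReal| ≤ Λ)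
    (h : E → ℝ) (hmeas : Measurable h) (h0 : ∀ y, 0 ≤ h y) (hle : ∀ y, h y ≤ C) :
    ∫ y, h y ∂μ - ∫ y, h y ∂ν ≤ Λ * C := by
  have hint : ∀ (κ : Measure E) [IsProbabilityMeasure κ], Integrable h κ := by
    intro κ _
    refine Integrable.mono' (integrable_const C) hmeas.aestronglyMeasurable ?_
    exact Filter.Eventually.of_forall fun y => by
      rw [Real.norm_eq_abs, abs_of_nonneg (h0 y)]; exact hle y
  have hempty : ∀ t : ℝ, C < t → {a : E | t < h a} = ∅ := by
    intro t ht
    ext a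
    simp only [Set.mem_setOf_eq, Set.mem_empty_iff_false, iff_false, not_lt]
    exact (hle a).trans ht.le
  have hFmeas : ∀ (κ : Measure E), Measurable (fun t : ℝ => (κ {a | t < h a}).toReal) := by
    intro κ
    refine Measurable.ennreal_toReal ?_
    exact Antitone.measurable (fun _ _ hst => measure_mono (fun _ hb => lt_of_le_of_lt hst hb))
  have hFint : ∀ (κ : Measure E) [IsProbabilityMeasure κ],
      Integrable (fun t : ℝ => (κ {a | t < h a}).toReal)
        ((volume : Measure ℝ).restrict (Set.Ioi 0)) := by
    intro κ _
    refine Integrable.mono'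
      (g := Set.indicator (Set.Ioc (0:ℝ) C) (fun _ => (1:ℝ))) ?_
      (hFmeas κ).aestronglyMeasurable ?_
    · exact (integrable_indicator_iff measurableSet_Ioc).2
        (integrableOn_const measure_Ioc_lt_top.ne)
    · rw [ae_restrict_iff' measurableSet_Ioi]
      refine Filter.Eventually.of_forall fun t ht => ?_
      rw [Real.norm_eq_abs, abs_of_nonneg ENNReal.toReal_nonneg]
      by_cases htC : t ≤ C
      · rw [Set.indicator_of_mem (Set.mem_Ioc.mpr ⟨ht, htC⟩)]
        exact ENNReal.toReal_le_of_le_ofReal zero_le_one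
          (by simpa using prob_le_one (μ := κ) (s := {a | t < h a}))
      · rw [Set.indicator_of_notMem (fun hm => htC hm.2), hempty t (not_le.mp htC)]
        simp
  have hmeasB : ∀ t : ℝ, MeasurableSet {a : E | t < h a} :=
    fun t => measurableSet_lt measurable_const hmeas
  rw [(hint μ).integral_eq_integral_meas_lt (Filter.Eventually.of_forall h0),
    (hint ν).integral_eq_integral_meas_lt (Filter.Eventually.of_forall h0)]
  simp only [measureReal_def]
  rw [← integral_sub (hFint μ) (hFint ν)]
  have hbound : ∀ t : ℝ, t ∈ Set.Ioi (0:ℝ) →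
      (μ {a | t < h a}).toReal - (ν {a | t < h a}).toReal
        ≤ Set.indicator (Set.Ioc (0:ℝ) C) (fun _ => Λ) t := by
    intro t ht
    by_cases htC : t ≤ C
    · rw [Set.indicator_of_mem (Set.mem_Ioc.mpr ⟨ht, htC⟩)]
      exact (le_abs_self _).trans (hmix _ (hmeasB t))
    · rw [Set.indicator_of_notMem (fun hm => htC hm.2), hempty t (not_le.mp htC)]
      simp
  calc ∫ t in Set.Ioi (0:ℝ), ((μ {a | t < h a}).toReal - (ν {a | t < h a}).toReal)
      ≤ ∫ t in Set.Ioi (0:ℝ), Set.indicator (Set.Ioc (0:ℝ) C) (fun _ => Λ) t := by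
        refine integral_mono_ae ((hFint μ).sub (hFint ν)) ?_ ?_
        · exact (integrable_indicator_iff measurableSet_Ioc).2
            (integrableOn_const measure_Ioc_lt_top.ne)
        · exact (ae_restrict_iff' measurableSet_Ioi).mpr (Filter.Eventually.of_forall hbound)
    _ = Λ * C := by
        rw [integral_indicator measurableSet_Ioc]
        rw [Measure.restrict_restrict measurableSet_Ioc]
        have : Set.Ioc (0:ℝ) C ∩ Set.Ioi 0 = Set.Ioc 0 C := by
          ext t; simp only [Set.mem_inter_iff, Set.mem_Ioc, Set.mem_Ioi]; tauto
        rw [this]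
        simp [Real.volume_Ioc, ENNReal.toReal_ofReal hC, mul_comm, hC]

/-- Under the mixing condition (A.1) with constant `Λ`, the MPE operator satisfies
`‖Tf‖_sp ≤ ‖g‖_sp + (1/2) log(1 + Λ e^{2‖f‖_sp})`. -/
theorem mpe_span_growth_bound {E : Type*} [MeasurableSpace E]
    (P : Kernel E E) [IsMarkovKernel P]
    (Λ : ℝ) (hΛ : Λ ∈ Set.Ioo (0 : ℝ) 1)
    (hmix : ∀ B : Set E, MeasurableSet B → ∀ x x' : E,
      |(P x B).toReal - (P x' B).toReal| ≤ Λ)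
    (g : E → ℝ) (hg_meas : Measurable g) (Cg : ℝ) (hg_bdd : ∀ x, |g x| ≤ Cg)
    (f : E → ℝ) (hf_meas : Measurable f) (Cf : ℝ) (hf_bdd : ∀ x, |f x| ≤ Cf) :
    spanSeminorm (mpeOp P g f)
      ≤ spanSeminorm g + (1 / 2) * Real.log (1 + Λ * Real.exp (2 * spanSeminorm f)) := by
  obtain ⟨hΛ0, hΛ1⟩ := hΛ
  rcases isEmpty_or_nonempty E with hE | hE
  · have hlog : ∀ r : ℝ, (0:ℝ) ≤ Real.log (1 + Λ * Real.exp r) := by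
      intro r
      apply Real.log_nonneg
      nlinarith [Real.exp_pos r]
    simp only [spanSeminorm, Real.iSup_of_isEmpty, Real.iInf_of_isEmpty, sub_self, zero_div,
      mul_zero, Real.exp_zero, mul_one]
    linarith [Real.log_nonneg (by linarith : (1:ℝ) ≤ 1 + Λ)]
  -- nonempty case
  set M := ⨆ x, f x with hM
  set m := ⨅ x, f x with hm
  have hba : BddAbove (Set.range f) := ⟨Cf, by rintro _ ⟨y, rfl⟩; exact (abs_le.mp (hf_bdd y)).2⟩
  have hbb : BddBelow (Set.range f) := ⟨-Cf, by rintro _ ⟨y, rfl⟩; exact (abs_le.mp (hf_bdd y)).1⟩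
  have hfM : ∀ y, f y ≤ M := fun y => le_ciSup hba y
  have hfm : ∀ y, m ≤ f y := fun y => ciInf_le hbb y
  have x0 : E := Classical.choice hE
  have hmM : m ≤ M := (hfm x0).trans (hfM x0)
  set I : E → ℝ := fun x => ∫ y, Real.exp (f y) ∂(P x) with hI
  have hexpint : ∀ x : E, Integrable (fun y => Real.exp (f y)) (P x) := by
    intro x
    refine Integrable.mono' (integrable_const (Real.exp M))
      (hf_meas.exp).aestronglyMeasurable ?_
    exact Filter.Eventually.of_forall fun y => by
      rw [Real.norm_eq_abs, abs_of_nonneg (Real.exp_pos _).le]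
      exact Real.exp_le_exp.2 (hfM y)
  have hIm : ∀ x : E, Real.exp m ≤ I x := by
    intro x
    have := integral_mono (integrable_const (Real.exp m)) (hexpint x)
      (fun y => Real.exp_le_exp.2 (hfm y))
    simpa using this
  have hIpos : ∀ x : E, 0 < I x := fun x => lt_of_lt_of_le (Real.exp_pos m) (hIm x)
  -- key TV bound
  have hkey : ∀ x x' : E, I x - I x' ≤ Λ * (Real.exp M - Real.exp m) := by
    intro x x'
    have := tv_integral_diff_le (P x) (P x') Λ (Real.exp M - Real.exp m) hΛ0.le
      (by simp [Real.exp_le_exp.2 hmM])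
      (fun B hB => hmix B hB x x')
      (fun y => Real.exp (f y) - Real.exp m)
      (hf_meas.exp.sub measurable_const)
      (fun y => by simp [Real.exp_le_exp.2 (hfm y)])
      (fun y => by simp [Real.exp_le_exp.2 (hfM y)])
    rw [integral_sub (hexpint x) (integrable_const _),
      integral_sub (hexpint x') (integrable_const _)] at this
    simp only [integral_const, measureReal_def, measure_univ, ENNReal.toReal_one, one_smul] at this
    linarith
  set s : ℝ := 2 * spanSeminorm f with hs
  have hsMm : s = M - m := by simp [hs, spanSeminorm, hM, hm]; ring
  have hlogdiff : ∀ x x' : E,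
      Real.log (I x) - Real.log (I x') ≤ Real.log (1 + Λ * Real.exp s) := by
    intro x x'
    have h1 : I x ≤ I x' * (1 + Λ * Real.exp s) := by
      have hexps : Real.exp m * Real.exp s = Real.exp M := by
        rw [← Real.exp_add, hsMm]; ring_nf
      have h2 : Λ * (Real.exp M - Real.exp m) ≤ I x' * (Λ * Real.exp s) := by
        nlinarith [hIm x', Real.exp_pos m, Real.exp_pos s, Real.exp_pos M,
          mul_le_mul_of_nonneg_right (hIm x') (by positivity : (0:ℝ) ≤ Λ * Real.exp s)]
      nlinarith [hkey x x', hIpos x']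
    have h3 : Real.log (I x) ≤ Real.log (I x') + Real.log (1 + Λ * Real.exp s) := by
      rw [← Real.log_mul (hIpos x').ne' (by positivity)]
      exact Real.log_le_log (hIpos x) h1
    linarith
  have hgba : BddAbove (Set.range g) := ⟨Cg, by rintro _ ⟨y, rfl⟩; exact (abs_le.mp (hg_bdd y)).2⟩
  have hgbb : BddBelow (Set.range g) := ⟨-Cg, by rintro _ ⟨y, rfl⟩; exact (abs_le.mp (hg_bdd y)).1⟩
  set D : ℝ := ((⨆ x, g x) - ⨅ x, g x) + Real.log (1 + Λ * Real.exp s) with hD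
  have hpair : ∀ x x' : E, mpeOp P g f x ≤ mpeOp P g f x' + D := by
    intro x x'
    have hgd : g x - g x' ≤ (⨆ x, g x) - ⨅ x, g x :=
      sub_le_sub (le_ciSup hgba x) (ciInf_le hgbb x')
    have := hlogdiff x x'
    simp only [mpeOp, hD]
    linarith
  have h1 : (⨆ x, mpeOp P g f x) ≤ (⨅ x', mpeOp P g f x') + D := by
    have h2 : ∀ x', (⨆ x, mpeOp P g f x) ≤ mpeOp P g f x' + D :=
      fun x' => ciSup_le (fun x => hpair x x')
    have h3 : (⨆ x, mpeOp P g f x) - D ≤ ⨅ x', mpeOp P g f x' :=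
      le_ciInf (fun x' => by linarith [h2 x'])
    linarith
  have hgspan : spanSeminorm g = ((⨆ x, g x) - ⨅ x, g x) / 2 := rfl
  simp only [spanSeminorm]
  rw [show (2 : ℝ) * spanSeminorm f = s from rfl] at *
  linarith [h1]
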